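/- arXiv:2604.24973 — 4 statements merged into one kernel-verified Lean document; each statement's English description precedes it below -/
import Mathlib

section
/- (Single-merge overlap, Proposition 1.) Let n ∈ ℕ and let θ, θ̃ be angle assignments on depth n with prepared amplitudes ψ_b = ∏_{l=1}^n g(θ_{b_1…b_{l−1}}, b_l) and ψ̃_b = ∏_{l=1}^n g(θ̃_{b_1…b_{l−1}}, b_l). Fix a layer k with 0 ≤ k < n, control patterns x, y of length k, and reals θ_x, θ_y, θ_C. Assume: (i) θ̃ agrees with θ on every prefix except on bitstrings of length k lying in B(x) ∪ B(y); (ii) B(x) and B(y) are disjoint; (iii) θ takes the constant value θ_x on B(x) and the constant value θ_y on B(y), and θ̃ takes the constant value θ_C on B(x) ∪ B(y). Then Σ_{b ∈ {0,1}^n} ψ_b ψ̃_b = 1 − Σ_{w ∈ {x,y}} (1 − cos((θ_w − θ_C)/2)) · P_w, where P_w = Σ_{b ∈ B(w)} P_b and P_b = ∏_{l=1}^k f(θ_{b_1…b_{l−1}}, b_l). -/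
/-- `g θ i`: `g(θ,0) = cos(θ/2)`, `g(θ,1) = sin(θ/2)`, with bits as `Bool`. -/
noncomputable def g (θ : ℝ) : Bool → ℝ
  | false => Real.cos (θ / 2)
  | true  => Real.sin (θ / 2)

/-- `f(θ,i) = g(θ,i)²`. -/
noncomputable def f (θ : ℝ) (i : Bool) : ℝ := (g θ i) ^ 2

/-- Prepared amplitude `ψ_b = ∏_{l=1}^n g(θ_{b_1…b_{l−1}}, b_l)` of an angle
assignment `θ` on depth `n`. -/
noncomputable def amp (n : ℕ) (θ : (j : ℕ) → (Fin j → Bool) → ℝ) (b : Fin n → Bool) : ℝ :=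
  ∏ l : Fin n, g (θ l (fun i : Fin l => b (Fin.castLE l.isLt.le i))) (b l)

/-- Prefix probability `P_x = ∏_{l=1}^k f(θ_{x_1…x_{l−1}}, x_l)` for `x ∈ {0,1}^k`. -/
noncomputable def pref (θ : (j : ℕ) → (Fin j → Bool) → ℝ) (k : ℕ) (x : Fin k → Bool) : ℝ :=
  ∏ l : Fin k, f (θ l (fun i : Fin l => x (Fin.castLE l.isLt.le i))) (x l)

/-- `Consistent b x` means the bitstring `b` lies in `B(x)`, the set of bitstrings
consistent with the control pattern `x : Fin k → Option Bool` (`none` = `e`). -/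
def Consistent {k : ℕ} (b : Fin k → Bool) (x : Fin k → Option Bool) : Prop :=
  ∀ t : Fin k, ∀ v : Bool, x t = some v → b t = v

instance {k : ℕ} (b : Fin k → Bool) (x : Fin k → Option Bool) : Decidable (Consistent b x) :=
  inferInstanceAs (Decidable (∀ t : Fin k, ∀ v : Bool, x t = some v → b t = v))


noncomputable def Q (A : (j : ℕ) → (Fin j → Bool) → Bool → ℝ) (n : ℕ) : ℝ :=
  ∑ b : Fin n → Bool, ∏ l : Fin n, A l (fun i : Fin l => b (Fin.castLE l.isLt.le i)) (b l)

lemma Q_succ (A : (j : ℕ) → (Fin j → Bool) → Bool → ℝ) (n : ℕ) :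
    Q A (n+1) = ∑ c : Fin n → Bool,
      (∏ l : Fin n, A l (fun i : Fin l => c (Fin.castLE l.isLt.le i)) (c l))
        * (A n c false + A n c true) := by
  rw [Q, ← (Fin.snocEquiv (fun _ : Fin (n+1) => Bool)).sum_comp]
  rw [Fintype.sum_prod_type_right]
  refine Finset.sum_congr rfl fun c _ => ?_
  simp only [Fin.snocEquiv_apply]
  have key : ∀ t : Bool, (∏ l : Fin (n+1),
      A l (fun i : Fin l => Fin.snoc (α := fun _ => Bool) c t (Fin.castLE l.isLt.le i))
        (Fin.snoc (α := fun _ => Bool) c t l))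
      = (∏ l : Fin n, A l (fun i : Fin l => c (Fin.castLE l.isLt.le i)) (c l)) * A n c t := by
    intro t
    rw [Fin.prod_univ_castSucc]
    congr 1
    · refine Finset.prod_congr rfl fun l _ => ?_
      have harg : (fun i : Fin ((Fin.castSucc l) : Fin (n+1)) =>
          Fin.snoc (α := fun _ => Bool) c t (Fin.castLE (Fin.castSucc l).isLt.le i))
          = fun i => c (Fin.castLE l.isLt.le i) := by
        funext i
        have h1 : (Fin.castLE (Fin.castSucc l).isLt.le i) =
            Fin.castSucc (Fin.castLE l.isLt.le i) := rfl
        rw [h1, Fin.snoc_castSucc (α := fun _ => Bool) t c]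
      have hbit : Fin.snoc (α := fun _ => Bool) c t l.castSucc = c l :=
        Fin.snoc_castSucc (α := fun _ => Bool) t c l
      rw [harg, hbit]
      rfl
    · have hlast : Fin.snoc (α := fun _ => Bool) c t (Fin.last n) = t :=
        Fin.snoc_last ..
      rw [hlast]
      show A n _ t = A n c t
      congr 1
      funext i
      exact Fin.snoc_castSucc (α := fun _ => Bool) t c i
  rw [Fintype.sum_bool, key true, key false]
  ring

lemma Q_drop (A : (j : ℕ) → (Fin j → Bool) → Bool → ℝ) (m : ℕ) :
    ∀ n, m ≤ n → (∀ j (z : Fin j → Bool), m ≤ j → j < n → A j z false + A j z true = 1) →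
    Q A n = Q A m := by
  intro n
  induction n with
  | zero => intro h _; cases Nat.le_zero.mp h; rfl
  | succ n ih =>
    intro hmn h1
    rcases eq_or_lt_of_le hmn with h | h
    · rw [h]
    · have hmn' : m ≤ n := Nat.lt_succ_iff.mp h
      rw [Q_succ]
      have hone : ∀ c : Fin n → Bool, A n c false + A n c true = 1 := fun c =>
        h1 n c hmn' (Nat.lt_succ_self n)
      calc ∑ c : Fin n → Bool,
            (∏ l : Fin n, A l (fun i : Fin l => c (Fin.castLE l.isLt.le i)) (c l))
              * (A n c false + A n c true)
          = ∑ c : Fin n → Bool,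
            (∏ l : Fin n, A l (fun i : Fin l => c (Fin.castLE l.isLt.le i)) (c l)) := by
            refine Finset.sum_congr rfl fun c _ => ?_; rw [hone c, mul_one]
        _ = Q A m := ih hmn' (fun j z hj hjn => h1 j z hj (Nat.lt_succ_of_lt hjn))

lemma f_sum (θ : ℝ) : f θ false + f θ true = 1 := by
  simp only [f, g]
  exact Real.cos_sq_add_sin_sq _

lemma pref_sum (θ : (j : ℕ) → (Fin j → Bool) → ℝ) (k : ℕ) :
    ∑ b : Fin k → Bool, pref θ k b = 1 := by
  have h := Q_drop (fun j z t => f (θ j z) t) 0 k (Nat.zero_le k)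
    (fun j z _ _ => f_sum _)
  calc ∑ b : Fin k → Bool, pref θ k b
      = Q (fun j z t => f (θ j z) t) k := rfl
    _ = Q (fun j z t => f (θ j z) t) 0 := h
    _ = 1 := by simp [Q]

/-- Single-merge overlap (Proposition 1): if `θ'` is obtained from `θ` by replacing,
in layer `k`, the constant angle `θx` on `B(x)` and `θy` on `B(y)` (with `B(x)`, `B(y)`
disjoint) by the common angle `θC`, then
`Σ_b ψ_b ψ'_b = 1 − Σ_{w∈{x,y}} (1 − cos((θ_w − θ_C)/2))·P_w`. -/
theorem stmt1 (n k : ℕ) (hk : k < n)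
    (θ θ' : (j : ℕ) → (Fin j → Bool) → ℝ)
    (x y : Fin k → Option Bool)
    (θx θy θC : ℝ)
    (hagree : ∀ j, j < n → j ≠ k → ∀ z : Fin j → Bool, θ' j z = θ j z)
    (hagreek : ∀ z : Fin k → Bool, ¬ Consistent z x → ¬ Consistent z y → θ' k z = θ k z)
    (hdisj : ∀ b : Fin k → Bool, ¬ (Consistent b x ∧ Consistent b y))
    (hθx : ∀ b : Fin k → Bool, Consistent b x → θ k b = θx)
    (hθy : ∀ b : Fin k → Bool, Consistent b y → θ k b = θy)
    (hθC : ∀ b : Fin k → Bool, Consistent b x ∨ Consistent b y → θ' k b = θC) :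
    ∑ b : Fin n → Bool, amp n θ b * amp n θ' b
      = 1 - ((1 - Real.cos ((θx - θC) / 2)) *
              (∑ b ∈ Finset.univ.filter (fun b : Fin k → Bool => Consistent b x), pref θ k b)
           + (1 - Real.cos ((θy - θC) / 2)) *
              (∑ b ∈ Finset.univ.filter (fun b : Fin k → Bool => Consistent b y), pref θ k b)) := by
  have step1 : ∑ b : Fin n → Bool, amp n θ b * amp n θ' b
      = Q (fun j z t => g (θ j z) t * g (θ' j z) t) n := by
    refine Finset.sum_congr rfl fun b _ => ?_
    rw [amp, amp, ← Finset.prod_mul_distrib]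
  have step2 : Q (fun j z t => g (θ j z) t * g (θ' j z) t) n
      = Q (fun j z t => g (θ j z) t * g (θ' j z) t) (k+1) := by
    refine Q_drop _ (k+1) n hk ?_
    intro j z hj hjn
    rw [hagree j hjn (by omega) z]
    have := f_sum (θ j z)
    simpa [f, sq] using this
  rw [step1, step2, Q_succ]
  have hpref : ∀ c : Fin k → Bool,
      (∏ l : Fin k, (fun j z t => g (θ j z) t * g (θ' j z) t) (l : ℕ)
        (fun i : Fin l => c (Fin.castLE l.isLt.le i)) (c l)) = pref θ k c := by
    intro c
    rw [pref]
    refine Finset.prod_congr rfl fun l _ => ?_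
    have hθ' : θ' l (fun i : Fin l => c (Fin.castLE l.isLt.le i))
        = θ l (fun i : Fin l => c (Fin.castLE l.isLt.le i)) :=
      hagree l (l.isLt.trans hk) (Nat.ne_of_lt l.isLt) _
    simp only [hθ', f, sq]
  have hcos : ∀ c : Fin k → Bool,
      ((fun j z t => g (θ j z) t * g (θ' j z) t) k c false
        + (fun j z t => g (θ j z) t * g (θ' j z) t) k c true)
      = Real.cos ((θ k c - θ' k c) / 2) := by
    intro c
    simp only [g]
    rw [sub_div]
    exact (Real.cos_sub _ _).symm
  have hval : ∀ c : Fin k → Bool,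
      pref θ k c * Real.cos ((θ k c - θ' k c) / 2)
      = pref θ k c -
        ((if Consistent c x then (1 - Real.cos ((θx - θC) / 2)) * pref θ k c else 0)
        + (if Consistent c y then (1 - Real.cos ((θy - θC) / 2)) * pref θ k c else 0)) := by
    intro c
    by_cases hx : Consistent c x
    · have hy : ¬ Consistent c y := fun h => hdisj c ⟨hx, h⟩
      rw [if_pos hx, if_neg hy, hθx c hx, hθC c (Or.inl hx)]
      ring
    · by_cases hy : Consistent c y
      · rw [if_neg hx, if_pos hy, hθy c hy, hθC c (Or.inr hy)]
        ring
      · rw [if_neg hx, if_neg hy, hagreek c hx hy, sub_self, zero_div, Real.cos_zero]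
        ring
  calc ∑ c : Fin k → Bool,
        (∏ l : Fin k, (fun j z t => g (θ j z) t * g (θ' j z) t) (l : ℕ)
          (fun i : Fin l => c (Fin.castLE l.isLt.le i)) (c l))
        * ((fun j z t => g (θ j z) t * g (θ' j z) t) k c false
          + (fun j z t => g (θ j z) t * g (θ' j z) t) k c true)
      = ∑ c : Fin k → Bool, pref θ k c * Real.cos ((θ k c - θ' k c) / 2) := by
        refine Finset.sum_congr rfl fun c _ => ?_
        rw [hpref c, hcos c]
    _ = ∑ c : Fin k → Bool, (pref θ k c -
          ((if Consistent c x then (1 - Real.cos ((θx - θC) / 2)) * pref θ k c else 0)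
          + (if Consistent c y then (1 - Real.cos ((θy - θC) / 2)) * pref θ k c else 0))) :=
        Finset.sum_congr rfl fun c _ => hval c
    _ = (∑ c : Fin k → Bool, pref θ k c)
        - ((∑ c : Fin k → Bool,
            if Consistent c x then (1 - Real.cos ((θx - θC) / 2)) * pref θ k c else 0)
          + (∑ c : Fin k → Bool,
            if Consistent c y then (1 - Real.cos ((θy - θC) / 2)) * pref θ k c else 0)) := by
        rw [Finset.sum_sub_distrib, Finset.sum_add_distrib]
    _ = 1 - ((1 - Real.cos ((θx - θC) / 2)) *
              (∑ b ∈ Finset.univ.filter (fun b : Fin k → Bool => Consistent b x), pref θ k b)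
           + (1 - Real.cos ((θy - θC) / 2)) *
              (∑ b ∈ Finset.univ.filter (fun b : Fin k → Bool => Consistent b y), pref θ k b)) := by
        rw [pref_sum, Finset.mul_sum, Finset.mul_sum, Finset.sum_filter, Finset.sum_filter]
end

section
/- (Exactness within one layer, Proposition 2.) Let n ∈ ℕ and let θ, θ̃ be angle assignments on depth n that agree on all bitstrings of every length except possibly on bitstrings of one fixed length k with 0 ≤ k < n. Let ψ and ψ̃ be the respective prepared amplitudes. Then Σ_{b ∈ {0,1}^n} ψ_b ψ̃_b = 1 − Σ_{x ∈ {0,1}^k} (1 − cos((θ_x − θ̃_x)/2)) · P_x, where P_x = ∏_{l=1}^k f(θ_{x_1…x_{l−1}}, x_l). -/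
def shift (θ : (j : ℕ) → (Fin j → Bool) → ℝ) (i : Bool) : (j : ℕ) → (Fin j → Bool) → ℝ :=
  fun j z => θ (j + 1) (Fin.cons i z)

lemma prefix_eq (n : ℕ) (i : Bool) (b : Fin n → Bool) (l : Fin n) (h : (l : ℕ) + 1 ≤ n + 1) :
    (fun t : Fin ((l : ℕ) + 1) => (Fin.cons (α := fun _ => Bool) i b) (Fin.castLE h t))
      = Fin.cons (α := fun _ => Bool) i (fun t : Fin l => b (Fin.castLE l.isLt.le t)) := by
  funext t
  refine Fin.cases ?_ (fun j => ?_) t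
  · simp
  · simp only [Fin.cons_succ]
    have : (Fin.castLE h j.succ : Fin (n+1)) =
        Fin.succ (Fin.castLE l.isLt.le j) := rfl
    rw [this, Fin.cons_succ]

lemma amp_cons (n : ℕ) (θ : (j : ℕ) → (Fin j → Bool) → ℝ) (i : Bool) (b : Fin n → Bool) :
    amp (n + 1) θ (Fin.cons i b) = g (θ 0 Fin.elim0) i * amp n (shift θ i) b := by
  rw [amp, Fin.prod_univ_succ]
  congr 1
  · simp only [Fin.cons_zero]
    congr 1
    congr 1
    exact funext fun t => t.elim0
  · rw [amp]
    refine Finset.prod_congr rfl fun l _ => ?_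
    rw [Fin.cons_succ]
    congr 1
    show θ ((l : ℕ) + 1) _ = θ ((l : ℕ) + 1) _
    congr 1
    exact prefix_eq n i b l (Fin.succ l).isLt.le

lemma pref_cons (k : ℕ) (θ : (j : ℕ) → (Fin j → Bool) → ℝ) (i : Bool) (x : Fin k → Bool) :
    pref θ (k + 1) (Fin.cons i x) = f (θ 0 Fin.elim0) i * pref (shift θ i) k x := by
  rw [pref, Fin.prod_univ_succ]
  congr 1
  · simp only [Fin.cons_zero]
    congr 1
    congr 1
    exact funext fun t => t.elim0
  · rw [pref]
    refine Finset.prod_congr rfl fun l _ => ?_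
    rw [Fin.cons_succ]
    congr 1
    show θ ((l : ℕ) + 1) _ = θ ((l : ℕ) + 1) _
    congr 1
    exact prefix_eq k i x l (Fin.succ l).isLt.le

lemma sum_cons (n : ℕ) (F : (Fin (n+1) → Bool) → ℝ) :
    ∑ b : Fin (n+1) → Bool, F b = ∑ i : Bool, ∑ b : Fin n → Bool, F (Fin.cons i b) := by
  rw [← (Fin.consEquiv (fun _ : Fin (n+1) => Bool)).sum_comp F, Fintype.sum_prod_type]
  rfl

lemma g_sq_sum (θ : ℝ) : ∑ i : Bool, g θ i ^ 2 = 1 := by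
  simp [Fintype.sum_bool, g]

lemma sum_f (θ : ℝ) : ∑ i : Bool, f θ i = 1 := by
  simp [f, Fintype.sum_bool, g]

lemma sum_gg (a b : ℝ) : ∑ i : Bool, g a i * g b i = Real.cos ((a - b) / 2) := by
  rw [Fintype.sum_bool, sub_div, Real.cos_sub]
  simp [g]
  ring

lemma norm_amp (n : ℕ) : ∀ (θ θ' : (j : ℕ) → (Fin j → Bool) → ℝ),
    (∀ j, j < n → ∀ z : Fin j → Bool, θ' j z = θ j z) →
    ∑ b : Fin n → Bool, amp n θ b * amp n θ' b = 1 := by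
  induction n with
  | zero => intro θ θ' _; simp [amp]
  | succ m ih =>
    intro θ θ' h
    rw [sum_cons m (fun b => amp (m+1) θ b * amp (m+1) θ' b)]
    have h0 : θ' 0 Fin.elim0 = θ 0 Fin.elim0 := h 0 (Nat.succ_pos m) _
    have key : ∀ i : Bool, ∑ b : Fin m → Bool,
        amp (m+1) θ (Fin.cons i b) * amp (m+1) θ' (Fin.cons i b)
        = f (θ 0 Fin.elim0) i := by
      intro i
      have hsum : ∑ b : Fin m → Bool, amp m (shift θ i) b * amp m (shift θ' i) b = 1 :=
        ih (shift θ i) (shift θ' i) (fun j hj z => h (j+1) (by omega) _)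
      calc ∑ b : Fin m → Bool,
            amp (m+1) θ (Fin.cons i b) * amp (m+1) θ' (Fin.cons i b)
          = ∑ b : Fin m → Bool,
            f (θ 0 Fin.elim0) i * (amp m (shift θ i) b * amp m (shift θ' i) b) := by
            refine Finset.sum_congr rfl fun b _ => ?_
            rw [amp_cons, amp_cons, h0, f]; ring
        _ = f (θ 0 Fin.elim0) i := by rw [← Finset.mul_sum, hsum, mul_one]
    simp_rw [key]
    exact sum_f _

lemma norm_pref (k : ℕ) : ∀ (θ : (j : ℕ) → (Fin j → Bool) → ℝ),
    ∑ x : Fin k → Bool, pref θ k x = 1 := by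
  induction k with
  | zero => intro θ; simp [pref]
  | succ m ih =>
    intro θ
    rw [sum_cons m (fun x => pref θ (m+1) x)]
    have key : ∀ i : Bool, ∑ x : Fin m → Bool, pref θ (m+1) (Fin.cons i x)
        = f (θ 0 Fin.elim0) i := by
      intro i
      simp_rw [pref_cons]
      rw [← Finset.mul_sum, ih (shift θ i), mul_one]
    simp_rw [key]
    exact sum_f _

lemma key_main (n : ℕ) : ∀ k, k < n → ∀ (θ θ' : (j : ℕ) → (Fin j → Bool) → ℝ),
    (∀ j, j < n → j ≠ k → ∀ z : Fin j → Bool, θ' j z = θ j z) →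
    ∑ b : Fin n → Bool, amp n θ b * amp n θ' b
      = 1 - ∑ x : Fin k → Bool,
          (1 - Real.cos ((θ k x - θ' k x) / 2)) * pref θ k x := by
  induction n with
  | zero => intro k hk; omega
  | succ m ih =>
    intro k hk θ θ' h
    rw [sum_cons m (fun b => amp (m+1) θ b * amp (m+1) θ' b)]
    cases k with
    | zero =>
      have key : ∀ i : Bool, ∑ b : Fin m → Bool,
          amp (m+1) θ (Fin.cons i b) * amp (m+1) θ' (Fin.cons i b)
          = g (θ 0 Fin.elim0) i * g (θ' 0 Fin.elim0) i := by
        intro i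
        have hsum : ∑ b : Fin m → Bool, amp m (shift θ i) b * amp m (shift θ' i) b = 1 :=
          norm_amp m (shift θ i) (shift θ' i) (fun j hj z => h (j+1) (by omega) (by omega) _)
        calc ∑ b : Fin m → Bool,
              amp (m+1) θ (Fin.cons i b) * amp (m+1) θ' (Fin.cons i b)
            = ∑ b : Fin m → Bool, (g (θ 0 Fin.elim0) i * g (θ' 0 Fin.elim0) i)
                * (amp m (shift θ i) b * amp m (shift θ' i) b) := by
              refine Finset.sum_congr rfl fun b _ => ?_
              rw [amp_cons, amp_cons]; ring
          _ = _ := by rw [← Finset.mul_sum, hsum, mul_one]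
      simp_rw [key]
      rw [sum_gg]
      rw [Fintype.sum_subsingleton
        (fun x : Fin 0 → Bool => (1 - Real.cos ((θ 0 x - θ' 0 x) / 2)) * pref θ 0 x)
        (Fin.elim0 : Fin 0 → Bool)]
      have hp : pref θ 0 (Fin.elim0 : Fin 0 → Bool) = 1 := by simp [pref]
      rw [hp, mul_one]
      ring
    | succ j =>
      have hne : (0 : ℕ) ≠ j + 1 := by omega
      have h0 : θ' 0 Fin.elim0 = θ 0 Fin.elim0 := h 0 (by omega) hne _
      have key : ∀ i : Bool, ∑ b : Fin m → Bool,
          amp (m+1) θ (Fin.cons i b) * amp (m+1) θ' (Fin.cons i b)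
          = f (θ 0 Fin.elim0) i * (1 - ∑ x : Fin j → Bool,
              (1 - Real.cos ((θ (j+1) (Fin.cons i x) - θ' (j+1) (Fin.cons i x)) / 2))
                * pref (shift θ i) j x) := by
        intro i
        have hsum := ih j (by omega) (shift θ i) (shift θ' i)
          (fun j' hj' hne' z => h (j'+1) (by omega) (by omega) _)
        calc ∑ b : Fin m → Bool,
              amp (m+1) θ (Fin.cons i b) * amp (m+1) θ' (Fin.cons i b)
            = ∑ b : Fin m → Bool, f (θ 0 Fin.elim0) i
                * (amp m (shift θ i) b * amp m (shift θ' i) b) := by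
              refine Finset.sum_congr rfl fun b _ => ?_
              rw [amp_cons, amp_cons, h0, f]; ring
          _ = _ := by
              rw [← Finset.mul_sum, hsum]
              rfl
      simp_rw [key]
      rw [sum_cons j (fun x => (1 - Real.cos ((θ (j+1) x - θ' (j+1) x) / 2)) * pref θ (j+1) x)]
      have rexp : ∀ i : Bool, ∑ x : Fin j → Bool,
          (1 - Real.cos ((θ (j+1) (Fin.cons i x) - θ' (j+1) (Fin.cons i x)) / 2))
            * pref θ (j+1) (Fin.cons i x)
          = f (θ 0 Fin.elim0) i * ∑ x : Fin j → Bool,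
              (1 - Real.cos ((θ (j+1) (Fin.cons i x) - θ' (j+1) (Fin.cons i x)) / 2))
                * pref (shift θ i) j x := by
        intro i
        rw [Finset.mul_sum]
        refine Finset.sum_congr rfl fun x _ => ?_
        rw [pref_cons]; ring
      simp_rw [rexp]
      have hf := sum_f (θ 0 Fin.elim0)
      rw [Fintype.sum_bool] at hf ⊢
      rw [Fintype.sum_bool]
      nlinarith [hf]

/-- Exactness within one layer (Proposition 2): if two angle assignments `θ, θ'`
on depth `n` agree on all bitstrings of every length `< n` except possibly length `k`,
then `Σ_b ψ_b ψ'_b = 1 − Σ_{x∈{0,1}^k} (1 − cos((θ_x − θ'_x)/2))·P_x`. -/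
theorem stmt2 (n k : ℕ) (hk : k < n)
    (θ θ' : (j : ℕ) → (Fin j → Bool) → ℝ)
    (hagree : ∀ j, j < n → j ≠ k → ∀ z : Fin j → Bool, θ' j z = θ j z) :
    ∑ b : Fin n → Bool, amp n θ b * amp n θ' b
      = 1 - ∑ x : Fin k → Bool,
          (1 - Real.cos ((θ k x - θ' k x) / 2)) * pref θ k x := by
  exact key_main n k hk θ θ' hagree
end

section
/- (Lower bound on the overlap, cluster form of Theorem 1.) Let n ∈ ℕ and let θ, θ̃ be angle assignments on depth n with prepared amplitudes ψ and ψ̃. Let 𝒞 be a finite family of pairwise disjoint sets of bitstrings (of lengths < n) whose union contains every bitstring x with θ̃_x ≠ θ_x, and for each C ∈ 𝒞 let R_C be a real number such that W_x ≤ R_C · P_x for every x ∈ C. Then Σ_{b ∈ {0,1}^n} ψ_b ψ̃_b ≥ 1 − Σ_{C ∈ 𝒞} R_C · L_C, where L_C = Σ_{x ∈ C} P_x · (1 − cos((θ_x − θ̃_x)/2)). -/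
/-- Joint weight `W_x = ∏_{l=1}^k g(θ_{x_1…x_{l−1}}, x_l)·g(θ'_{x_1…x_{l−1}}, x_l)`. -/
noncomputable def W (θ θ' : (j : ℕ) → (Fin j → Bool) → ℝ) (k : ℕ) (x : Fin k → Bool) : ℝ :=
  ∏ l : Fin k,
    (g (θ l (fun i : Fin l => x (Fin.castLE l.isLt.le i))) (x l) *
      g (θ' l (fun i : Fin l => x (Fin.castLE l.isLt.le i))) (x l))


lemma W_snoc (θ θ' : (j : ℕ) → (Fin j → Bool) → ℝ) (n : ℕ) (x : Fin n → Bool) (i : Bool) :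
    W θ θ' (n+1) (Fin.snoc x i) = W θ θ' n x * (g (θ n x) i * g (θ' n x) i) := by
  unfold W
  rw [Fin.prod_univ_castSucc]
  have hsnoc : ∀ (j : Fin (n+1)) (hj : (j:ℕ) < n), (Fin.snoc x i : Fin (n+1) → Bool) j = x ⟨j, hj⟩ := by
    intro j hj
    rw [Fin.snoc]
    simp [hj]
    rfl
  congr 1
  · apply Finset.prod_congr rfl
    intro l _
    have h1 : (fun j : Fin ((l.castSucc : Fin (n+1)) : ℕ) =>
        (Fin.snoc x i : Fin (n+1) → Bool) (Fin.castLE (l.castSucc).isLt.le j))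
        = (fun j : Fin (l : ℕ) => x (Fin.castLE l.isLt.le j)) := by
      funext j
      exact hsnoc _ (lt_of_lt_of_le j.isLt l.isLt.le)
    have h2 : (Fin.snoc x i : Fin (n+1) → Bool) l.castSucc = x l := by simp
    rw [h2]
    congr 1 <;> · congr 1; exact congrArg _ h1
  · have h1 : (fun j : Fin (((Fin.last n) : Fin (n+1)) : ℕ) =>
        (Fin.snoc x i : Fin (n+1) → Bool) (Fin.castLE (Fin.last n).isLt.le j))
        = x := by
      funext j
      exact hsnoc _ j.isLt
    rw [Fin.snoc_last]
    congr 1 <;> · congr 1; exact congrArg _ h1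

lemma sum_bool_g (a b : ℝ) : (g a true * g b true) + (g a false * g b false) = Real.cos ((a - b)/2) := by
  simp [g, sub_div]
  rw [Real.cos_sub]
  ring

lemma key (θ θ' : (j : ℕ) → (Fin j → Bool) → ℝ) (n : ℕ) :
    ∑ b : Fin n → Bool, W θ θ' n b
      = 1 - ∑ k ∈ Finset.range n, ∑ x : Fin k → Bool,
          W θ θ' k x * (1 - Real.cos ((θ k x - θ' k x)/2)) := by
  induction n with
  | zero => simp [W]
  | succ n ih =>
    have h1 : ∑ b : Fin (n+1) → Bool, W θ θ' (n+1) b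
        = ∑ p : Bool × (Fin n → Bool), W θ θ' (n+1) (Fin.snoc p.2 p.1) := by
      exact (Fintype.sum_equiv (Fin.snocEquiv (fun _ => Bool)) _ _ (fun p => rfl)).symm
    rw [h1]
    rw [Fintype.sum_prod_type_right]
    have h2 : ∀ x : Fin n → Bool, ∑ i : Bool, W θ θ' (n+1) (Fin.snoc x i)
        = W θ θ' n x * Real.cos ((θ n x - θ' n x)/2) := by
      intro x
      simp only [W_snoc, Fintype.sum_bool, ← mul_add, sum_bool_g]
    simp only [h2]
    rw [Finset.sum_range_succ]
    have : ∀ x : Fin n → Bool, W θ θ' n x * Real.cos ((θ n x - θ' n x)/2)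
        = W θ θ' n x - W θ θ' n x * (1 - Real.cos ((θ n x - θ' n x)/2)) := by
      intro x; ring
    simp only [this]
    rw [Finset.sum_sub_distrib, ih]
    ring

/-- Lower bound on the overlap (cluster form of Theorem 1): if `𝒞` is a finite family
of pairwise disjoint sets of bitstrings of lengths `< n` whose union contains every
bitstring where `θ' ≠ θ`, and `R_C` satisfies `W_x ≤ R_C·P_x` for all `x ∈ C`, then
`Σ_b ψ_b ψ'_b ≥ 1 − Σ_{C∈𝒞} R_C·L_C` with `L_C = Σ_{x∈C} P_x(1 − cos((θ_x − θ'_x)/2))`. -/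
theorem stmt5 (n : ℕ) (θ θ' : (j : ℕ) → (Fin j → Bool) → ℝ)
    (𝒞 : Finset (Finset ((k : Fin n) × (Fin (k : ℕ) → Bool))))
    (hdisj : ∀ C ∈ 𝒞, ∀ C' ∈ 𝒞, C ≠ C' → Disjoint C C')
    (hcover : ∀ p : (k : Fin n) × (Fin (k : ℕ) → Bool),
      θ' p.1 p.2 ≠ θ p.1 p.2 → ∃ C ∈ 𝒞, p ∈ C)
    (R : Finset ((k : Fin n) × (Fin (k : ℕ) → Bool)) → ℝ)
    (hR : ∀ C ∈ 𝒞, ∀ p ∈ C, W θ θ' p.1 p.2 ≤ R C * pref θ p.1 p.2) :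
    ∑ b : Fin n → Bool, amp n θ b * amp n θ' b
      ≥ 1 - ∑ C ∈ 𝒞, R C *
          ∑ p ∈ C, pref θ p.1 p.2 * (1 - Real.cos ((θ p.1 p.2 - θ' p.1 p.2) / 2)) := by
  set term : ((k : Fin n) × (Fin (k : ℕ) → Bool)) → ℝ :=
    fun p => W θ θ' p.1 p.2 * (1 - Real.cos ((θ p.1 p.2 - θ' p.1 p.2)/2)) with hterm
  have h0 : ∑ b : Fin n → Bool, amp n θ b * amp n θ' b = ∑ b : Fin n → Bool, W θ θ' n b := by
    apply Finset.sum_congr rfl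
    intro b _
    rw [amp, amp, W, ← Finset.prod_mul_distrib]
  have h1 : ∑ b : Fin n → Bool, W θ θ' n b
      = 1 - ∑ p : ((k : Fin n) × (Fin (k : ℕ) → Bool)), term p := by
    rw [key]
    congr 1
    rw [← Finset.univ_sigma_univ, Finset.sum_sigma, ← Fin.sum_univ_eq_sum_range
      (fun k => ∑ x : Fin k → Bool, W θ θ' k x * (1 - Real.cos ((θ k x - θ' k x)/2))) n]
  rw [h0, h1]
  apply sub_le_sub_left
  set D : Finset ((k : Fin n) × (Fin (k : ℕ) → Bool)) := 𝒞.biUnion id with hD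
  have hsplit : ∑ p : ((k : Fin n) × (Fin (k : ℕ) → Bool)), term p = ∑ p ∈ D, term p := by
    rw [← Finset.sum_subset (Finset.subset_univ D)]
    intro p _ hp
    have : θ' p.1 p.2 = θ p.1 p.2 := by
      by_contra h
      obtain ⟨C, hC, hpC⟩ := hcover p h
      exact hp (Finset.mem_biUnion.2 ⟨C, hC, hpC⟩)
    simp [hterm, this]
  rw [hsplit, hD, Finset.sum_biUnion]
  · apply Finset.sum_le_sum
    intro C hC
    rw [Finset.mul_sum]
    apply Finset.sum_le_sum
    intro p hp
    have hcos : 0 ≤ 1 - Real.cos ((θ p.1 p.2 - θ' p.1 p.2)/2) := by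
      have := Real.cos_le_one ((θ p.1 p.2 - θ' p.1 p.2)/2); linarith
    calc term p ≤ (R C * pref θ p.1 p.2) * (1 - Real.cos ((θ p.1 p.2 - θ' p.1 p.2)/2)) :=
          mul_le_mul_of_nonneg_right (hR C hC p hp) hcos
      _ = R C * (pref θ p.1 p.2 * (1 - Real.cos ((θ p.1 p.2 - θ' p.1 p.2)/2))) := by ring
  · intro C hC C' hC' hne
    exact hdisj C hC C' hC' hne
end

section
/- (Correctness of the Grover–Rudolph angle construction for nonnegative real states.) Let n ∈ ℕ and let ψ : {0,1}^n → ℝ satisfy ψ_b ≥ 0 for all b. For 0 ≤ k ≤ n and x ∈ {0,1}^k define the coarse-grained amplitude ψ^{(k)}_x = √(Σ_{s ∈ {0,1}^{n−k}} ψ_{xs}²), where xs denotes concatenation, and define the angle θ_x = 2·arccos(ψ^{(k+1)}_{x0} / ψ^{(k)}_x) if ψ^{(k)}_x ≠ 0, and θ_x = 0 otherwise. Then for every b ∈ {0,1}^n, ∏_{l=1}^n g(θ_{b_1…b_{l−1}}, b_l) = ψ_b / ψ^{(0)}, provided ψ is not identically zero; in particular, if Σ_{b} ψ_b² = 1 then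 ∏_{l=1}^n g(θ_{b_1…b_{l−1}}, b_l) = ψ_b for every b. -/
/-- Concatenation `xs ∈ {0,1}^n` of `x ∈ {0,1}^k` and `s ∈ {0,1}^{n−k}` for `k ≤ n`. -/
def appendBits {n k : ℕ} (hk : k ≤ n) (x : Fin k → Bool) (s : Fin (n - k) → Bool)
    (i : Fin n) : Bool :=
  Fin.append x s (Fin.cast (by omega) i)

/-- Coarse-grained amplitude `ψ^{(k)}_x = √(Σ_{s∈{0,1}^{n−k}} ψ_{xs}²)`. -/
noncomputable def coarse (n : ℕ) (ψ : (Fin n → Bool) → ℝ) (k : ℕ) (hk : k ≤ n)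
    (x : Fin k → Bool) : ℝ :=
  Real.sqrt (∑ s : Fin (n - k) → Bool, (ψ (appendBits hk x s)) ^ 2)

/-- Grover–Rudolph angle at the prefix `x ∈ {0,1}^k` (for `k < n`):
`θ_x = 2·arccos(ψ^{(k+1)}_{x0} / ψ^{(k)}_x)` if `ψ^{(k)}_x ≠ 0`, and `0` otherwise.
(The value for `k ≥ n` is an irrelevant junk value `0`.) -/
noncomputable def grAngle (n : ℕ) (ψ : (Fin n → Bool) → ℝ) (k : ℕ)
    (x : Fin k → Bool) : ℝ :=
  if h : k < n then
    (if coarse n ψ k h.le x = 0 then 0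
      else 2 * Real.arccos (coarse n ψ (k + 1) h (Fin.snoc x false) / coarse n ψ k h.le x))
  else 0

lemma appendBits_apply {n k : ℕ} (hk : k ≤ n) (x : Fin k → Bool) (s : Fin (n - k) → Bool)
    (i : Fin n) : appendBits hk x s i =
      if h : (i : ℕ) < k then x ⟨i, h⟩ else s ⟨(i : ℕ) - k, by omega⟩ := by
  simp [appendBits, Fin.append, Fin.addCases, Fin.cast]

def splitEquiv (m : ℕ) : (Bool × (Fin m → Bool)) ≃ (Fin (m+1) → Bool) where
  toFun p j := if hj : (j : ℕ) = 0 then p.1 else p.2 ⟨(j : ℕ) - 1, by omega⟩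
  invFun s := (s ⟨0, by omega⟩, fun j => s ⟨(j : ℕ) + 1, by omega⟩)
  left_inv p := by
    ext j
    · simp
    · simp
  right_inv s := by
    funext j
    by_cases hj : (j : ℕ) = 0
    · simp [hj]; congr 1; simp [Fin.ext_iff]; omega
    · simp [hj]; congr 1; simp [Fin.ext_iff]; omega

lemma appendBits_snoc {n k : ℕ} (h : k < n) (x : Fin k → Bool) (c : Bool)
    (t : Fin (n - (k+1)) → Bool) :
    appendBits h (Fin.snoc x c) t =
      appendBits h.le x
        (fun j : Fin (n - k) => if hj : (j : ℕ) = 0 then c else t ⟨(j : ℕ) - 1, by omega⟩) := by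
  funext i
  simp only [appendBits_apply, Fin.snoc, Fin.castLT]
  split_ifs <;> first | rfl | omega

lemma sum_split {M : Type*} [AddCommMonoid M] {n k : ℕ} (h : k < n) (x : Fin k → Bool)
    (F : (Fin n → Bool) → M) :
    ∑ s : Fin (n - k) → Bool, F (appendBits h.le x s)
      = (∑ t : Fin (n - (k+1)) → Bool, F (appendBits h (Fin.snoc x false) t))
        + ∑ t : Fin (n - (k+1)) → Bool, F (appendBits h (Fin.snoc x true) t) := by
  let e : (Bool × (Fin (n - (k+1)) → Bool)) ≃ (Fin (n - k) → Bool) :=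
    (splitEquiv _).trans (Equiv.arrowCongr (finCongr (by omega)) (Equiv.refl Bool))
  have he : ∀ (c : Bool) (t : Fin (n - (k+1)) → Bool),
      e (c, t) = fun j : Fin (n - k) =>
        if hj : (j : ℕ) = 0 then c else t ⟨(j : ℕ) - 1, by omega⟩ := by
    intro c t
    funext j
    simp [e, splitEquiv, Equiv.arrowCongr, finCongr, Fin.cast]
  rw [← Equiv.sum_comp e (fun s => F (appendBits h.le x s)), Fintype.sum_prod_type,
    Fintype.sum_bool, add_comm]
  congr 1 <;>
    exact Finset.sum_congr rfl fun t _ => by rw [appendBits_snoc, he]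

lemma coarse_nonneg {n : ℕ} (ψ : (Fin n → Bool) → ℝ) {k : ℕ} (hk : k ≤ n)
    (x : Fin k → Bool) : 0 ≤ coarse n ψ k hk x := Real.sqrt_nonneg _

lemma coarse_sq {n : ℕ} (ψ : (Fin n → Bool) → ℝ) {k : ℕ} (hk : k ≤ n)
    (x : Fin k → Bool) :
    coarse n ψ k hk x ^ 2 = ∑ s : Fin (n - k) → Bool, (ψ (appendBits hk x s)) ^ 2 :=
  Real.sq_sqrt (by positivity)

lemma coarse_rec {n : ℕ} (ψ : (Fin n → Bool) → ℝ) {k : ℕ} (h : k < n)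
    (x : Fin k → Bool) :
    coarse n ψ k h.le x ^ 2
      = coarse n ψ (k+1) h (Fin.snoc x false) ^ 2
        + coarse n ψ (k+1) h (Fin.snoc x true) ^ 2 := by
  rw [coarse_sq, coarse_sq, coarse_sq]
  exact sum_split h x (fun b => ψ b ^ 2)

lemma coarse_le {n : ℕ} (ψ : (Fin n → Bool) → ℝ) {k : ℕ} (h : k < n)
    (x : Fin k → Bool) (c : Bool) :
    coarse n ψ (k+1) h (Fin.snoc x c) ≤ coarse n ψ k h.le x := by
  have h2 := coarse_rec ψ h x
  have hsq : coarse n ψ (k+1) h (Fin.snoc x c) ^ 2 ≤ coarse n ψ k h.le x ^ 2 := by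
    cases c <;> nlinarith [sq_nonneg (coarse n ψ (k+1) h (Fin.snoc x false)),
      sq_nonneg (coarse n ψ (k+1) h (Fin.snoc x true))]
  have := coarse_nonneg ψ h (Fin.snoc x c)
  have := coarse_nonneg ψ h.le x
  nlinarith

lemma coarse_zero_succ {n : ℕ} (ψ : (Fin n → Bool) → ℝ) {k : ℕ} (h : k < n)
    (x : Fin k → Bool) (hz : coarse n ψ k h.le x = 0) (c : Bool) :
    coarse n ψ (k+1) h (Fin.snoc x c) = 0 := by
  have h2 := coarse_rec ψ h x
  rw [hz] at h2
  have h3 := coarse_nonneg ψ h (Fin.snoc x c)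
  cases c <;> nlinarith [sq_nonneg (coarse n ψ (k+1) h (Fin.snoc x false)),
    sq_nonneg (coarse n ψ (k+1) h (Fin.snoc x true)),
    coarse_nonneg ψ h (Fin.snoc x false), coarse_nonneg ψ h (Fin.snoc x true)]

lemma g_step {n : ℕ} (ψ : (Fin n → Bool) → ℝ) {k : ℕ} (h : k < n)
    (x : Fin k → Bool) (hx : coarse n ψ k h.le x ≠ 0) (c : Bool) :
    g (grAngle n ψ k x) c = coarse n ψ (k+1) h (Fin.snoc x c) / coarse n ψ k h.le x := by
  have hpos : 0 < coarse n ψ k h.le x := (coarse_nonneg ψ h.le x).lt_of_ne (Ne.symm hx)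
  have hr0 : 0 ≤ coarse n ψ (k+1) h (Fin.snoc x false) / coarse n ψ k h.le x :=
    div_nonneg (coarse_nonneg _ _ _) hpos.le
  have hr1 : coarse n ψ (k+1) h (Fin.snoc x false) / coarse n ψ k h.le x ≤ 1 :=
    (div_le_one hpos).2 (coarse_le ψ h x false)
  have hθ : grAngle n ψ k x
      = 2 * Real.arccos (coarse n ψ (k+1) h (Fin.snoc x false) / coarse n ψ k h.le x) := by
    rw [grAngle, dif_pos h, if_neg hx]
  cases c
  · rw [hθ]
    show Real.cos _ = _
    rw [mul_div_cancel_left₀ _ (two_ne_zero), Real.cos_arccos (by linarith) hr1]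
  · rw [hθ]
    show Real.sin _ = _
    rw [mul_div_cancel_left₀ _ (two_ne_zero), Real.sin_arccos]
    have hrec := coarse_rec ψ h x
    have : 1 - (coarse n ψ (k+1) h (Fin.snoc x false) / coarse n ψ k h.le x) ^ 2
        = (coarse n ψ (k+1) h (Fin.snoc x true) / coarse n ψ k h.le x) ^ 2 := by
      field_simp
      nlinarith
    rw [this, Real.sqrt_sq (div_nonneg (coarse_nonneg _ _ _) hpos.le)]

/-- Correctness of the Grover–Rudolph angle construction for nonnegative real states:
if `ψ ≥ 0` is not identically zero, then for every `b ∈ {0,1}^n` the prepared amplitude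
of the Grover–Rudolph angles equals `ψ_b / ψ^{(0)}`; in particular, if `Σ_b ψ_b² = 1`
then it equals `ψ_b`. -/
theorem stmt13 (n : ℕ) (ψ : (Fin n → Bool) → ℝ)
    (hψ : ∀ b, 0 ≤ ψ b) (hne : ψ ≠ 0) :
    (∀ b : Fin n → Bool,
        amp n (grAngle n ψ) b
          = ψ b / coarse n ψ 0 (Nat.zero_le n) (fun i => i.elim0)) ∧
    ((∑ b : Fin n → Bool, (ψ b) ^ 2) = 1 →
      ∀ b : Fin n → Bool, amp n (grAngle n ψ) b = ψ b) := by
  obtain ⟨b0, hb0⟩ : ∃ b0, ψ b0 ≠ 0 := by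
    by_contra hc; push_neg at hc; exact hne (funext fun b => hc b)
  set c0 := coarse n ψ 0 (Nat.zero_le n) (fun i => i.elim0) with hc0def
  have hsum0 : ∑ s : Fin (n - 0) → Bool,
      ψ (appendBits (Nat.zero_le n) (fun i => i.elim0) s) ^ 2 = ∑ b, ψ b ^ 2 := by
    apply Fintype.sum_equiv (Equiv.arrowCongr (finCongr (by omega : n - 0 = n)) (Equiv.refl Bool))
    intro s
    apply congrArg (fun z => ψ z ^ 2)
    funext i
    rw [appendBits_apply, dif_neg (by omega)]
    simp [Equiv.arrowCongr, finCongr, Fin.cast]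
  have hc0pos : 0 < c0 := by
    rw [hc0def, coarse]
    apply Real.sqrt_pos.2
    rw [hsum0]
    exact Finset.sum_pos' (fun s _ => by positivity)
      ⟨b0, Finset.mem_univ _, pow_pos ((hψ b0).lt_of_ne (Ne.symm hb0)) 2⟩
  have key : ∀ b : Fin n → Bool, ∀ k, ∀ hk : k ≤ n,
      (∏ l ∈ Finset.range k, (if h : l < n then
        g (grAngle n ψ l (fun i : Fin l => b (Fin.castLE h.le i))) (b ⟨l, h⟩) else 1))
      = coarse n ψ k hk (fun i => b (Fin.castLE hk i)) / c0 := by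
    intro b k
    induction k with
    | zero =>
      intro hk
      rw [Finset.prod_range_zero]
      have h0 : coarse n ψ 0 hk (fun i => b (Fin.castLE hk i)) = c0 := by
        rw [hc0def]; congr 1; funext i; exact i.elim0
      rw [h0, div_self hc0pos.ne']
    | succ k ih =>
      intro hk
      have hklt : k < n := hk
      rw [Finset.prod_range_succ, ih hklt.le, dif_pos hklt]
      have hsnoc : (fun i : Fin (k+1) => b (Fin.castLE hk i))
          = Fin.snoc (fun i : Fin k => b (Fin.castLE hklt.le i)) (b ⟨k, hklt⟩) := by
        funext i
        simp only [Fin.snoc, Fin.castLT, cast_eq]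
        split_ifs with hi
        · congr 1
        · congr 1; simp [Fin.ext_iff]; omega
      set x := fun i : Fin k => b (Fin.castLE hklt.le i) with hxdef
      rw [hsnoc]
      by_cases hx : coarse n ψ k hklt.le x = 0
      · rw [hx, coarse_zero_succ ψ hklt x hx (b ⟨k, hklt⟩)]
        simp
      · rw [g_step ψ hklt x hx (b ⟨k, hklt⟩)]
        field_simp
  have hamp : ∀ b : Fin n → Bool, amp n (grAngle n ψ) b
      = ∏ l ∈ Finset.range n, (if h : l < n then
        g (grAngle n ψ l (fun i : Fin l => b (Fin.castLE h.le i))) (b ⟨l, h⟩) else 1) := by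
    intro b
    rw [amp, ← Fin.prod_univ_eq_prod_range]
    exact Finset.prod_congr rfl fun l _ => by rw [dif_pos l.isLt]
  have hfinal : ∀ b : Fin n → Bool,
      coarse n ψ n le_rfl (fun i => b (Fin.castLE le_rfl i)) = ψ b := by
    intro b
    rw [coarse]
    have h1 : ∀ s : Fin (n - n) → Bool,
        ψ (appendBits le_rfl (fun i => b (Fin.castLE le_rfl i)) s) = ψ b := by
      intro s
      congr 1
      funext i
      rw [appendBits_apply, dif_pos i.isLt]
      exact congrArg b (Fin.ext rfl)
    rw [Finset.sum_congr rfl fun s _ => by rw [h1 s]]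
    rw [Finset.sum_const, Finset.card_univ]
    simp only [Nat.sub_self, Fintype.card_fun, Fintype.card_fin, Fintype.card_bool, pow_zero,
      one_smul]
    exact Real.sqrt_sq (hψ b)
  have main : ∀ b : Fin n → Bool, amp n (grAngle n ψ) b = ψ b / c0 := by
    intro b
    rw [hamp b, key b n le_rfl, hfinal b]
  refine ⟨main, fun hnorm b => ?_⟩
  have hc0 : c0 = 1 := by
    have : c0 ^ 2 = 1 := by
      rw [hc0def, coarse_sq, hsum0, hnorm]
    nlinarith
  rw [main b, hc0, div_one]
end
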